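/- Let g be a bijection of ℤ with bounded displacement and a_{n,j} = exp(-n·e^{-|j|/n}). Then Σ_{j∈ℤ} (a_{n,j}²/(1+a_{n,j}²))²·(a_{n,g(j)}/a_{n,j} - 1)² ≤ C''²/n, where C'' is a constant depending only on w(g) = sup_j|g(j)-j|; in particular this sum tends to 0 as n → ∞. -/

import Mathlib

set_option maxHeartbeats 1000000


open Filter

/-- `a n j = exp (-n e^{-|j|/n})`. -/
noncomputable def a (n : ℕ) (j : ℤ) : ℝ :=
  Real.exp (-(n : ℝ) * Real.exp (-|(j : ℝ)| / n))


lemma exp_sub_one_abs_le (x : ℝ) : |Real.exp x - 1| ≤ |x| * Real.exp |x| := by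
  rcases le_total 0 x with hx | hx
  · rw [abs_of_nonneg hx, abs_of_nonneg (by linarith [Real.add_one_le_exp x] : (0:ℝ) ≤ Real.exp x - 1)]
    have h := Real.add_one_le_exp (-x)
    have hp := Real.exp_pos x
    have h2 : Real.exp (-x) * Real.exp x = 1 := by
      rw [← Real.exp_add]; simp
    nlinarith
  · have h1 : Real.exp x ≤ 1 := Real.exp_le_one_iff.mpr hx
    rw [abs_of_nonpos hx, abs_of_nonpos (by linarith : Real.exp x - 1 ≤ 0)]
    have h2 := Real.add_one_le_exp x
    have h3 : (1:ℝ) ≤ Real.exp (-x) := Real.one_le_exp (by linarith)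
    nlinarith

lemma exp_neg_sub_le {u v : ℝ} (h : u ≤ v) :
    Real.exp (-u) - Real.exp (-v) ≤ (v - u) * Real.exp (-u) := by
  have h1 := Real.add_one_le_exp (-(v - u))
  have h2 : Real.exp (-v) = Real.exp (-u) * Real.exp (-(v-u)) := by
    rw [← Real.exp_add]; ring_nf
  have hp := Real.exp_pos (-u)
  nlinarith

lemma cube_le_exp {x : ℝ} (hx : 0 ≤ x) : x ^ 3 ≤ 27 * Real.exp x := by
  have h1 := Real.add_one_le_exp (x / 3)
  have h2 : Real.exp (x/3) ^ 3 = Real.exp x := by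
    rw [← Real.exp_nat_mul]; congr 1; push_cast; ring
  have h3 : (x/3)^3 ≤ Real.exp (x/3) ^ 3 :=
    pow_le_pow_left₀ (by positivity) (by linarith) 3
  nlinarith

lemma ratio_bound (w : ℝ) (hw : 0 ≤ w) (n : ℕ) (hn : 0 < n) (g : Equiv.Perm ℤ)
    (hg : ∀ j : ℤ, |(g j : ℝ) - j| ≤ w) (j : ℤ) :
    |a n (g j) / a n j - 1| ≤
      w * Real.exp w * Real.exp (w * Real.exp w) * Real.exp (-|(j : ℝ)| / n) := by
  have hN0 : (0:ℝ) < n := by exact_mod_cast hn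
  have hN : (1:ℝ) ≤ n := by exact_mod_cast hn
  set u : ℝ := |(j : ℝ)| / n with hu_def
  set v : ℝ := |((g j : ℤ) : ℝ)| / n with hv_def
  have hu0 : 0 ≤ u := by positivity
  have hv0 : 0 ≤ v := by positivity
  set t : ℝ := Real.exp (-u) with ht_def
  have ht0 : 0 < t := Real.exp_pos _
  have ht1 : t ≤ 1 := Real.exp_le_one_iff.mpr (by linarith)
  set x : ℝ := (n:ℝ) * (Real.exp (-u) - Real.exp (-v)) with hx_def
  have h_ratio : a n (g j) / a n j = Real.exp x := by
    unfold a; rw [← Real.exp_sub]; congr 1; simp only [hx_def, hu_def, hv_def, neg_div]; ring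
  have huv : |u - v| ≤ w / n := by
    have h1 : |(|(j:ℝ)|) - (|((g j : ℤ) : ℝ)|)| ≤ |(j:ℝ) - ((g j : ℤ):ℝ)| :=
      abs_abs_sub_abs_le_abs_sub _ _
    have h2 := hg j
    have h3 : |(j:ℝ) - ((g j : ℤ):ℝ)| = |((g j : ℤ):ℝ) - (j:ℝ)| := abs_sub_comm _ _
    rw [hu_def, hv_def, div_sub_div_same, abs_div, abs_of_pos hN0]
    gcongr
    linarith
  have hwn : w / n ≤ w := by
    rw [div_le_iff₀ hN0]; nlinarith
  have hexp_wn : Real.exp (w / n) ≤ Real.exp w := Real.exp_le_exp.mpr hwn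
  have hx : |x| ≤ w * Real.exp w * t := by
    rw [hx_def, abs_mul, abs_of_pos hN0]
    rcases le_total u v with h | h
    · have hd0 : 0 ≤ Real.exp (-u) - Real.exp (-v) := by
        have := Real.exp_le_exp.mpr (neg_le_neg h); linarith
      rw [abs_of_nonneg hd0]
      have hb := exp_neg_sub_le h
      have h4 : v - u ≤ w / n := by
        have := abs_le.mp huv; linarith [this.1]
      have h5 : (n:ℝ) * (Real.exp (-u) - Real.exp (-v)) ≤ (n:ℝ) * ((w/n) * t) := by
        have : Real.exp (-u) - Real.exp (-v) ≤ (w/n) * t := by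
          calc Real.exp (-u) - Real.exp (-v) ≤ (v - u) * Real.exp (-u) := hb
          _ ≤ (w/n) * t := by apply mul_le_mul_of_nonneg_right h4 (le_of_lt ht0)
        exact mul_le_mul_of_nonneg_left this (le_of_lt hN0)
      have h6 : (n:ℝ) * ((w/n) * t) = w * t := by field_simp
      have h7 : w * t ≤ w * Real.exp w * t := by
        nlinarith [Real.one_le_exp hw, mul_nonneg hw ht0.le]
      linarith
    · have hd0 : Real.exp (-u) - Real.exp (-v) ≤ 0 := by
        have := Real.exp_le_exp.mpr (neg_le_neg h); linarith
      rw [abs_of_nonpos hd0]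
      have hb := exp_neg_sub_le h
      have h4 : u - v ≤ w / n := by
        have := abs_le.mp huv; linarith [this.2]
      have hev : Real.exp (-v) ≤ Real.exp (w/n) * t := by
        rw [ht_def, ← Real.exp_add]
        apply Real.exp_le_exp.mpr; linarith
      have h5 : -(Real.exp (-u) - Real.exp (-v)) ≤ (w/n) * (Real.exp (w/n) * t) := by
        have : Real.exp (-v) - Real.exp (-u) ≤ (u - v) * Real.exp (-v) := exp_neg_sub_le h
        nlinarith [Real.exp_pos (-v), Real.exp_pos (w/n)]
      have h6 : (n:ℝ) * ((w/n) * (Real.exp (w/n) * t)) = w * Real.exp (w/n) * t := by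
        field_simp
      have h7 : (n:ℝ) * -(Real.exp (-u) - Real.exp (-v)) ≤ w * Real.exp (w/n) * t :=
        by rw [← h6]; exact mul_le_mul_of_nonneg_left h5 (le_of_lt hN0)
      have h8 : w * Real.exp (w/n) * t ≤ w * Real.exp w * t := by
        apply mul_le_mul_of_nonneg_right _ (le_of_lt ht0)
        exact mul_le_mul_of_nonneg_left hexp_wn hw
      linarith
  have hxb : |x| ≤ w * Real.exp w := by
    calc |x| ≤ w * Real.exp w * t := hx
    _ ≤ w * Real.exp w * 1 := by
        apply mul_le_mul_of_nonneg_left ht1 (by positivity)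
    _ = w * Real.exp w := mul_one _
  rw [h_ratio]
  calc |Real.exp x - 1| ≤ |x| * Real.exp |x| := exp_sub_one_abs_le x
  _ ≤ (w * Real.exp w * t) * Real.exp (w * Real.exp w) := by
      apply mul_le_mul hx (Real.exp_le_exp.mpr hxb) (le_of_lt (Real.exp_pos _)) (by positivity)
  _ = w * Real.exp w * Real.exp (w * Real.exp w) * t := by ring
  _ = w * Real.exp w * Real.exp (w * Real.exp w) * Real.exp (-|(j : ℝ)| / n) := by
      rw [ht_def, hu_def]; congr 2; ring

noncomputable def T (n : ℕ) (k : ℕ) : ℝ :=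
  Real.exp (-(k:ℝ)/n) ^ 2 * Real.exp (-(4*(n:ℝ)) * Real.exp (-(k:ℝ)/n))


lemma T_nonneg (n k : ℕ) : 0 ≤ T n k := by unfold T; positivity


lemma T_le_geom (n k : ℕ) : T n k ≤ Real.exp (-2/(n:ℝ)) ^ k := by
  unfold T
  have h1 : Real.exp (-(k:ℝ)/n) ^ 2 = Real.exp (((2:ℕ):ℝ) * (-(k:ℝ)/n)) := by
    rw [Real.exp_nat_mul]
  have h2 : Real.exp (-2/(n:ℝ)) ^ k = Real.exp (((k:ℕ):ℝ) * (-2/(n:ℝ))) := by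
    rw [Real.exp_nat_mul]
  have h3 : ((2:ℕ):ℝ) * (-(k:ℝ)/n) = ((k:ℕ):ℝ) * (-2/(n:ℝ)) := by push_cast; ring
  have h4 : Real.exp (-(4*(n:ℝ)) * Real.exp (-(k:ℝ)/n)) ≤ 1 := by
    rw [Real.exp_le_one_iff]
    have := Real.exp_pos (-(k:ℝ)/n)
    nlinarith [Nat.cast_nonneg (α := ℝ) n]
  calc Real.exp (-(k:ℝ)/n) ^ 2 * Real.exp (-(4*(n:ℝ)) * Real.exp (-(k:ℝ)/n))
      ≤ Real.exp (-(k:ℝ)/n) ^ 2 * 1 := by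
        apply mul_le_mul_of_nonneg_left h4 (by positivity)
    _ = Real.exp (-2/(n:ℝ)) ^ k := by rw [mul_one, h1, h2, h3]


lemma T_head (n : ℕ) (hn : 0 < n) (k : ℕ) :
    T n k ≤ Real.exp ((k:ℝ)/n) / (2 * (n:ℝ)^3) := by
  have hN0 : (0:ℝ) < n := by exact_mod_cast hn
  set t : ℝ := Real.exp (-(k:ℝ)/n) with ht_def
  have ht0 : 0 < t := Real.exp_pos _
  have hinv : Real.exp ((k:ℝ)/n) * t = 1 := by
    rw [ht_def, ← Real.exp_add]; ring_nf; exact Real.exp_zero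
  have key : 2*(n:ℝ)^3*t^3 * Real.exp (-(4*(n:ℝ))*t) ≤ 1 := by
    have hc : (4*(n:ℝ)*t)^3 ≤ 27 * Real.exp (4*(n:ℝ)*t) := cube_le_exp (by positivity)
    have hE : Real.exp (-(4*(n:ℝ))*t) * Real.exp (4*(n:ℝ)*t) = 1 := by
      rw [← Real.exp_add]; ring_nf; exact Real.exp_zero
    have hEpos := Real.exp_pos (-(4*(n:ℝ))*t)
    nlinarith [mul_le_mul_of_nonneg_left hc hEpos.le]
  unfold T
  rw [← ht_def, div_eq_mul_inv]
  have h2 : t^2 * Real.exp (-(4*(n:ℝ))*t) * (2*(n:ℝ)^3) * t ≤ Real.exp ((k:ℝ)/n) * t := by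
    rw [hinv]; nlinarith [Real.exp_pos (-(4*(n:ℝ))*t)]
  have h3 : t^2 * Real.exp (-(4*(n:ℝ))*t) * (2*(n:ℝ)^3) ≤ Real.exp ((k:ℝ)/n) :=
    le_of_mul_le_mul_right (by linarith) ht0
  calc t^2 * Real.exp (-(4*(n:ℝ))*t) = (t^2 * Real.exp (-(4*(n:ℝ))*t) * (2*(n:ℝ)^3)) * (2*(n:ℝ)^3)⁻¹ := by
        field_simp
    _ ≤ Real.exp ((k:ℝ)/n) * (2*(n:ℝ)^3)⁻¹ := by
        apply mul_le_mul_of_nonneg_right h3 (by positivity)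

lemma T_summable (n : ℕ) (hn : 0 < n) : Summable (T n) := by
  have hN0 : (0:ℝ) < n := by exact_mod_cast hn
  apply Summable.of_nonneg_of_le (T_nonneg n) (T_le_geom n)
  apply summable_geometric_of_lt_one (le_of_lt (Real.exp_pos _))
  rw [Real.exp_lt_one_iff]
  exact div_neg_of_neg_of_pos (by norm_num) hN0


lemma tsum_T_le (n : ℕ) (hn : 0 < n) : ∑' k, T n k ≤ 8 / n := by
  have hN0 : (0:ℝ) < n := by exact_mod_cast hn
  have hN1 : (1:ℝ) ≤ n := by exact_mod_cast hn
  have hlogN : (0:ℝ) ≤ Real.log n := Real.log_nonneg hN1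
  set l : ℕ := ⌈Real.log n⌉₊ with hl_def
  set K : ℕ := n * l with hK_def
  have hKn : (K:ℝ) / n = (l:ℝ) := by
    rw [hK_def]; push_cast; field_simp
  have hexpl_ge : (n:ℝ) ≤ Real.exp l := by
    calc (n:ℝ) = Real.exp (Real.log n) := (Real.exp_log hN0).symm
    _ ≤ Real.exp l := Real.exp_le_exp.mpr (Nat.le_ceil _)
  have hexpl_le : Real.exp l ≤ Real.exp 1 * n := by
    calc Real.exp (l:ℝ) ≤ Real.exp (Real.log n + 1) :=
          Real.exp_le_exp.mpr (le_of_lt (Nat.ceil_lt_add_one hlogN))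
    _ = Real.exp 1 * n := by rw [Real.exp_add, Real.exp_log hN0]; ring
  have he1 : Real.exp 1 < 2.7182818286 := Real.exp_one_lt_d9
  have he1' : (0:ℝ) < Real.exp 1 := Real.exp_pos 1
  have hsum := T_summable n hn
  rw [← Summable.sum_add_tsum_nat_add (K+1) hsum]
  -- head bound
  have hr1 : (1:ℝ)/n + 1 ≤ Real.exp (1/(n:ℝ)) := by
    have := Real.add_one_le_exp (1/(n:ℝ)); linarith
  have hr_gt1 : (1:ℝ) < Real.exp (1/(n:ℝ)) := by
    have : (0:ℝ) < 1/n := by positivity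
    linarith
  have head : ∑ k ∈ Finset.range (K+1), T n k ≤ 4 / n := by
    have h1 : ∑ k ∈ Finset.range (K+1), T n k
        ≤ ∑ k ∈ Finset.range (K+1), Real.exp ((k:ℝ)/n) / (2 * (n:ℝ)^3) :=
      Finset.sum_le_sum fun k _ => T_head n hn k
    have h2 : ∀ k : ℕ, Real.exp ((k:ℝ)/n) = Real.exp (1/(n:ℝ)) ^ k := by
      intro k
      rw [← Real.exp_nat_mul]; congr 1; field_simp
    have h3 : ∑ k ∈ Finset.range (K+1), Real.exp ((k:ℝ)/n) / (2 * (n:ℝ)^3)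
        = (∑ k ∈ Finset.range (K+1), Real.exp (1/(n:ℝ)) ^ k) / (2 * (n:ℝ)^3) := by
      rw [← Finset.sum_div]
      congr 1
      exact Finset.sum_congr rfl fun k _ => by rw [h2]
    have h4 : ∑ k ∈ Finset.range (K+1), Real.exp (1/(n:ℝ)) ^ k
        = (Real.exp (1/(n:ℝ)) ^ (K+1) - 1) / (Real.exp (1/(n:ℝ)) - 1) :=
      geom_sum_eq (ne_of_gt hr_gt1) (K+1)
    have h5 : Real.exp (1/(n:ℝ)) ^ (K+1) ≤ Real.exp 1 ^ 2 * n := by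
      rw [← Real.exp_nat_mul]
      have : ((K+1 : ℕ):ℝ) * (1/(n:ℝ)) = (l:ℝ) + 1/n := by
        push_cast; rw [← hKn]; push_cast; field_simp
      rw [this, Real.exp_add]
      calc Real.exp (l:ℝ) * Real.exp (1/(n:ℝ)) ≤ (Real.exp 1 * n) * Real.exp 1 := by
            apply mul_le_mul hexpl_le _ (le_of_lt (Real.exp_pos _)) (by positivity)
            exact Real.exp_le_exp.mpr (by rw [div_le_one hN0]; exact hN1)
        _ = Real.exp 1 ^ 2 * n := by ring
    have h6 : (Real.exp (1/(n:ℝ)) ^ (K+1) - 1) / (Real.exp (1/(n:ℝ)) - 1)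
        ≤ (Real.exp 1 ^ 2 * n) * n := by
      rw [div_le_iff₀ (by linarith)]
      have hb : (1:ℝ)/n ≤ Real.exp (1/(n:ℝ)) - 1 := by linarith
      have : (Real.exp 1 ^ 2 * n) * (1/(n:ℝ)) ≤ (Real.exp 1 ^ 2 * n) * (Real.exp (1/(n:ℝ)) - 1) := by
        apply mul_le_mul_of_nonneg_left hb (by positivity)
      have he : (Real.exp 1 ^ 2 * n) * (1/(n:ℝ)) = Real.exp 1 ^ 2 := by field_simp
      nlinarith [Real.exp_pos (1/(n:ℝ))]
    calc ∑ k ∈ Finset.range (K+1), T n k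
        ≤ (∑ k ∈ Finset.range (K+1), Real.exp (1/(n:ℝ)) ^ k) / (2 * (n:ℝ)^3) := by
          rw [← h3]; exact h1
      _ ≤ ((Real.exp 1 ^ 2 * n) * n) / (2 * (n:ℝ)^3) := by
          apply div_le_div_of_nonneg_right _ (by positivity)
          rw [h4]; exact h6
      _ ≤ 4 / n := by
          rw [div_le_div_iff₀ (by positivity) hN0]
          have he2 : Real.exp 1 ^ 2 ≤ 8 := by nlinarith
          nlinarith [pow_pos hN0 3]
  -- tail bound
  set ρ : ℝ := Real.exp (-2/(n:ℝ)) with hρ_def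
  have hρ0 : (0:ℝ) ≤ ρ := le_of_lt (Real.exp_pos _)
  have hρ1 : ρ < 1 := by
    rw [hρ_def, Real.exp_lt_one_iff]
    exact div_neg_of_neg_of_pos (by norm_num) hN0
  have hgeom0 : Summable (fun i : ℕ => ρ ^ i) := summable_geometric_of_lt_one hρ0 hρ1
  have hgeom : Summable (fun i : ℕ => ρ ^ (i + (K+1))) := by
    simpa [pow_add] using hgeom0.mul_right (ρ^(K+1))
  have tail1 : ∑' i : ℕ, T n (i + (K+1)) ≤ ∑' i : ℕ, ρ^(i+(K+1)) :=
    Summable.tsum_le_tsum (fun i => T_le_geom n _) ((summable_nat_add_iff (K+1)).mpr hsum) hgeom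
  have tail2 : ∑' i : ℕ, ρ^(i+(K+1)) = (1-ρ)⁻¹ * ρ^(K+1) := by
    simp_rw [pow_add]
    rw [tsum_mul_right, tsum_geometric_of_lt_one hρ0 hρ1]
  have hρK : ρ^(K+1) ≤ 1/(n:ℝ)^2 := by
    rw [hρ_def, ← Real.exp_nat_mul]
    have hKcast : ((K:ℕ):ℝ) = (n:ℝ)*l := by rw [hK_def]; push_cast; ring
    have harg : ((K+1:ℕ):ℝ) * (-2/n) ≤ -(2*l) := by
      push_cast
      rw [hKcast]
      have heq : ((n:ℝ)*l+1)*(-2/n) = -(2*(l:ℝ)) - 2/n := by field_simp; ring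
      have hpos : (0:ℝ) < 2/n := by positivity
      linarith [heq.le, heq.ge]
    calc Real.exp (((K+1:ℕ):ℝ) * (-2/n)) ≤ Real.exp (-(2*l)) := Real.exp_le_exp.mpr harg
    _ = ((Real.exp l)^2)⁻¹ := by
        rw [← Real.exp_nat_mul, ← Real.exp_neg]
        norm_num
    _ ≤ 1/(n:ℝ)^2 := by
        rw [one_div]
        apply inv_anti₀ (by positivity)
        nlinarith
  have hρinv : (1-ρ)⁻¹ ≤ 4*n := by
    have hE : Real.exp (2/(n:ℝ)) ≤ 8 := by
      calc Real.exp (2/(n:ℝ)) ≤ Real.exp 2 := by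
            apply Real.exp_le_exp.mpr
            rw [div_le_iff₀ hN0]; nlinarith
      _ = Real.exp 1 ^ 2 := by rw [← Real.exp_nat_mul]; norm_num
      _ ≤ 8 := by nlinarith
    have hEinv : ρ = (Real.exp (2/(n:ℝ)))⁻¹ := by
      rw [hρ_def, ← Real.exp_neg]; congr 1; ring
    have h1 : 1 + 2/(n:ℝ) ≤ Real.exp (2/(n:ℝ)) := by
      have := Real.add_one_le_exp (2/(n:ℝ)); linarith
    have hEpos : (0:ℝ) < Real.exp (2/(n:ℝ)) := Real.exp_pos _
    have h2 : 1/(4*(n:ℝ)) ≤ 1 - ρ := by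
      have hmul : (1 - ρ) * Real.exp (2/(n:ℝ)) = Real.exp (2/(n:ℝ)) - 1 := by
        rw [hEinv]; field_simp
      have hge : 2/(n:ℝ) ≤ Real.exp (2/(n:ℝ)) - 1 := by linarith
      rw [div_le_iff₀ (by positivity)]
      have hthis : (1-ρ)*(4*(n:ℝ)) * Real.exp (2/(n:ℝ)) = (Real.exp (2/(n:ℝ)) - 1)*(4*(n:ℝ)) := by
        rw [← hmul]; ring
      have h8 : (2/(n:ℝ))*(4*(n:ℝ)) = 8 := by field_simp; ring
      have hstep : (2/(n:ℝ))*(4*(n:ℝ)) ≤ (Real.exp (2/(n:ℝ)) - 1)*(4*(n:ℝ)) :=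
        mul_le_mul_of_nonneg_right hge (by positivity)
      have hfin : 1 * Real.exp (2/(n:ℝ)) ≤ (1-ρ)*(4*(n:ℝ)) * Real.exp (2/(n:ℝ)) := by
        rw [hthis, one_mul]; linarith
      exact le_of_mul_le_mul_right (by linarith) hEpos
    calc (1-ρ)⁻¹ ≤ (1/(4*(n:ℝ)))⁻¹ := by
          apply inv_anti₀ (by positivity) h2
    _ = 4*n := by rw [one_div, inv_inv]
  have tail : ∑' i : ℕ, T n (i + (K+1)) ≤ 4 / n := by
    calc ∑' i : ℕ, T n (i + (K+1)) ≤ (1-ρ)⁻¹ * ρ^(K+1) := by rw [← tail2]; exact tail1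
    _ ≤ (4*n) * (1/(n:ℝ)^2) := by
        apply mul_le_mul hρinv hρK (by positivity)
        positivity
    _ = 4 / n := by field_simp
  have hfin := add_le_add head tail
  have heq8 : (4:ℝ)/n + 4/n = 8/n := by ring
  linarith

lemma term_le (w : ℝ) (hw : 0 ≤ w) (n : ℕ) (hn : 0 < n) (g : Equiv.Perm ℤ)
    (hg : ∀ j : ℤ, |(g j : ℝ) - j| ≤ w) (j : ℤ) :
    (a n j ^ 2 / (1 + a n j ^ 2)) ^ 2 * (a n (g j) / a n j - 1) ^ 2
      ≤ (w * Real.exp w * Real.exp (w * Real.exp w)) ^ 2 * T n j.natAbs := by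
  set C : ℝ := w * Real.exp w * Real.exp (w * Real.exp w) with hC_def
  have hC0 : 0 ≤ C := by positivity
  set t : ℝ := Real.exp (-|(j : ℝ)| / n) with ht_def
  have ht0 : 0 < t := Real.exp_pos _
  have hcast : (j.natAbs : ℝ) = |(j : ℝ)| := by
    rw [← Int.cast_natCast, Int.natCast_natAbs, Int.cast_abs]
  have hT : T n j.natAbs = t ^ 2 * Real.exp (-(4*(n:ℝ)) * t) := by
    unfold T
    rw [ht_def, hcast]
  have h1 : a n j ^ 2 / (1 + a n j ^ 2) ≤ a n j ^ 2 :=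
    div_le_self (sq_nonneg _) (by nlinarith [sq_nonneg (a n j)])
  have h2 : (a n j ^ 2 / (1 + a n j ^ 2)) ^ 2 ≤ (a n j ^ 2) ^ 2 :=
    pow_le_pow_left₀ (by positivity) h1 2
  have h3 : (a n (g j) / a n j - 1) ^ 2 ≤ (C * t) ^ 2 := by
    rw [← sq_abs]
    exact pow_le_pow_left₀ (abs_nonneg _) (ratio_bound w hw n hn g hg j) 2
  have h4 : (a n j ^ 2) ^ 2 = Real.exp (-(4*(n:ℝ)) * t) := by
    rw [show (a n j ^ 2) ^ 2 = a n j ^ 4 by ring]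
    rw [show a n j = Real.exp (-(n:ℝ) * t) from rfl]
    rw [← Real.exp_nat_mul]
    congr 1
    push_cast; ring
  calc (a n j ^ 2 / (1 + a n j ^ 2)) ^ 2 * (a n (g j) / a n j - 1) ^ 2
      ≤ (a n j ^ 2) ^ 2 * (C * t) ^ 2 := by
        apply mul_le_mul h2 h3 (sq_nonneg _) (by positivity)
    _ = C ^ 2 * (t ^ 2 * Real.exp (-(4*(n:ℝ)) * t)) := by rw [h4]; ring
    _ = C ^ 2 * T n j.natAbs := by rw [hT]


lemma sum_le_main (w : ℝ) (hw : 0 ≤ w) (n : ℕ) (hn : 0 < n) (g : Equiv.Perm ℤ)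
    (hg : ∀ j : ℤ, |(g j : ℝ) - j| ≤ w) :
    ∑' j : ℤ, (a n j ^ 2 / (1 + a n j ^ 2)) ^ 2 * (a n (g j) / a n j - 1) ^ 2
      ≤ (4 * (w * Real.exp w * Real.exp (w * Real.exp w))) ^ 2 / n := by
  have hN0 : (0:ℝ) < n := by exact_mod_cast hn
  set C : ℝ := w * Real.exp w * Real.exp (w * Real.exp w) with hC_def
  have hC0 : 0 ≤ C := by positivity
  set f : ℤ → ℝ := fun j => (a n j ^ 2 / (1 + a n j ^ 2)) ^ 2 * (a n (g j) / a n j - 1) ^ 2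
    with hf_def
  have hf_nonneg : ∀ j, 0 ≤ f j := fun j => mul_nonneg (sq_nonneg _) (sq_nonneg _)
  have hf_le : ∀ j : ℤ, f j ≤ C ^ 2 * T n j.natAbs := fun j => term_le w hw n hn g hg j
  have hTsum := T_summable n hn
  have hTsum1 : Summable (fun k : ℕ => T n (k + 1)) := (summable_nat_add_iff 1).mpr hTsum
  have hS1 : Summable (fun k : ℕ => f (k : ℤ)) := by
    apply Summable.of_nonneg_of_le (fun k => hf_nonneg _) (fun k => ?_) (hTsum.mul_left (C^2))
    simpa using hf_le (k : ℤ)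
  have hS2 : Summable (fun k : ℕ => f (-((k : ℤ) + 1))) := by
    apply Summable.of_nonneg_of_le (fun k => hf_nonneg _) (fun k => ?_) (hTsum1.mul_left (C^2))
    have h := hf_le (-((k : ℤ) + 1))
    have hnat : (-((k:ℤ) + 1)).natAbs = k + 1 := by omega
    rw [hnat] at h
    exact h
  have hsplit : ∑' j : ℤ, f j = (∑' k : ℕ, f (k : ℤ)) + ∑' k : ℕ, f (-((k:ℤ) + 1)) :=
    tsum_of_nat_of_neg_add_one hS1 hS2
  have hTtail_le : ∑' k : ℕ, T n (k + 1) ≤ ∑' k, T n k := by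
    have := Summable.sum_add_tsum_nat_add (f := T n) 1 hTsum
    have h00 : 0 ≤ ∑ i ∈ Finset.range 1, T n i := Finset.sum_nonneg fun i _ => T_nonneg n i
    linarith
  have hb1 : ∑' k : ℕ, f (k : ℤ) ≤ C ^ 2 * (8 / n) := by
    calc ∑' k : ℕ, f (k : ℤ) ≤ ∑' k : ℕ, C ^ 2 * T n k := by
          apply Summable.tsum_le_tsum _ hS1 (hTsum.mul_left (C^2))
          intro k; simpa using hf_le (k : ℤ)
    _ = C ^ 2 * ∑' k, T n k := tsum_mul_left
    _ ≤ C ^ 2 * (8 / n) := by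
        apply mul_le_mul_of_nonneg_left (tsum_T_le n hn) (by positivity)
  have hb2 : ∑' k : ℕ, f (-((k:ℤ) + 1)) ≤ C ^ 2 * (8 / n) := by
    calc ∑' k : ℕ, f (-((k:ℤ) + 1)) ≤ ∑' k : ℕ, C ^ 2 * T n (k + 1) := by
          apply Summable.tsum_le_tsum _ hS2 (hTsum1.mul_left (C^2))
          intro k
          have h := hf_le (-((k : ℤ) + 1))
          have hnat : (-((k:ℤ) + 1)).natAbs = k + 1 := by omega
          rw [hnat] at h
          exact h
    _ = C ^ 2 * ∑' k : ℕ, T n (k + 1) := tsum_mul_left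
    _ ≤ C ^ 2 * ∑' k, T n k := mul_le_mul_of_nonneg_left hTtail_le (by positivity)
    _ ≤ C ^ 2 * (8 / n) := mul_le_mul_of_nonneg_left (tsum_T_le n hn) (by positivity)
  have : (4 * C) ^ 2 / (n:ℝ) = C ^ 2 * (8/n) + C ^ 2 * (8/n) := by field_simp; ring
  rw [show (∑' j : ℤ, (a n j ^ 2 / (1 + a n j ^ 2)) ^ 2 * (a n (g j) / a n j - 1) ^ 2)
      = ∑' j : ℤ, f j from rfl, hsplit, this]
  exact add_le_add hb1 hb2


theorem sum1_estimate (w : ℝ) :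
    ∃ C'' : ℝ, ∀ g : Equiv.Perm ℤ, (∀ j : ℤ, |(g j : ℝ) - j| ≤ w) →
      (∀ n : ℕ, 0 < n →
        ∑' j : ℤ, (a n j ^ 2 / (1 + a n j ^ 2)) ^ 2 * (a n (g j) / a n j - 1) ^ 2
          ≤ C'' ^ 2 / n) ∧
      Tendsto (fun n : ℕ =>
          ∑' j : ℤ, (a n j ^ 2 / (1 + a n j ^ 2)) ^ 2 * (a n (g j) / a n j - 1) ^ 2)
        atTop (nhds 0) := by
  refine ⟨4 * (w * Real.exp w * Real.exp (w * Real.exp w)), fun g hg => ?_⟩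
  have hw : 0 ≤ w := le_trans (abs_nonneg _) (hg 0)
  have key := fun (n : ℕ) (hn : 0 < n) => sum_le_main w hw n hn g hg
  refine ⟨key, ?_⟩
  have hup : Tendsto (fun n : ℕ =>
      (4 * (w * Real.exp w * Real.exp (w * Real.exp w))) ^ 2 / (n:ℝ)) atTop (nhds 0) :=
    tendsto_const_div_atTop_nhds_zero_nat _
  apply tendsto_of_tendsto_of_tendsto_of_le_of_le' tendsto_const_nhds hup
  · exact Eventually.of_forall fun n =>
      tsum_nonneg fun j => mul_nonneg (sq_nonneg _) (sq_nonneg _)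
  · filter_upwards [eventually_gt_atTop 0] with n hn
    exact key n hn
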